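/- Let X be a pseudocompact countably κ-metrizable space, with countable κ-metric ρ, and let P be a countable Q-admissible family containing X. Then for every continuous map h : X → [0,1] there exist a countable Q-admissible family P' ⊇ P and a continuous map g : X_{P'} → [0,1] such that h = g ∘ q_{P'}, where q_{P'} : X → X_{P'} is the quotient map. -/
import Mathlib


open Set Topology

section Defs

variable {X : Type*}

/-- A set is regular closed if it equals the closure of its interior. -/
def IsRegClosed [TopologicalSpace X] (C : Set X) : Prop := closure (interior C) = C

/-- A set is regular open if it equals the interior of its closure. -/
def IsRegOpen [TopologicalSpace X] (V : Set X) : Prop := interior (closure V) = V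

/-- A countable κ-metric: axioms (K1)-(K3) and (K4_ω). -/
structure IsCountKappaMetric [TopologicalSpace X] (ρ : X → Set X → ℝ) : Prop where
  nonneg : ∀ x C, IsRegClosed C → 0 ≤ ρ x C
  k1 : ∀ x C, IsRegClosed C → (ρ x C = 0 ↔ x ∈ C)
  k2 : ∀ x C D, IsRegClosed C → IsRegClosed D → C ⊆ D → ρ x D ≤ ρ x C
  k3 : ∀ C, IsRegClosed C → Continuous fun x => ρ x C
  k4omega : ∀ C : ℕ → Set X, (∀ n, IsRegClosed (C n)) → (∀ n, C n ⊆ C (n + 1)) →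
    ∀ x, ρ x (closure (⋃ n, C n)) = ⨅ n, ρ x (C n)

/-- Axiom (K4): the infimum identity for arbitrary nonempty totally ordered
(by inclusion) families of regular closed sets. -/
def K4Chains [TopologicalSpace X] (ρ : X → Set X → ℝ) : Prop :=
  ∀ 𝒞 : Set (Set X), 𝒞.Nonempty → (∀ C ∈ 𝒞, IsRegClosed C) →
    (∀ C ∈ 𝒞, ∀ D ∈ 𝒞, C ⊆ D ∨ D ⊆ C) →
    ∀ x, ρ x (closure (⋃₀ 𝒞)) = sInf ((ρ x) '' 𝒞)

/-- A (full) κ-metric: axioms (K1)-(K4). -/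
structure IsKappaMetric [TopologicalSpace X] (ρ : X → Set X → ℝ)
    extends IsCountKappaMetric ρ : Prop where
  k4 : K4Chains ρ

/-- Countable chain condition. -/
def CCCSpace (X : Type*) [TopologicalSpace X] : Prop :=
  ∀ 𝒪 : Set (Set X), (∀ U ∈ 𝒪, IsOpen U ∧ U.Nonempty) →
    𝒪.PairwiseDisjoint id → 𝒪.Countable

/-- Pseudocompactness: every continuous real-valued function is bounded. -/
def Pseudocompact (X : Type*) [TopologicalSpace X] : Prop :=
  ∀ f : X → ℝ, Continuous f → ∃ M, ∀ x, |f x| ≤ M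

/-- d-open maps. -/
def IsDOpen {Y : Type*} [TopologicalSpace X] [TopologicalSpace Y] (f : X → Y) : Prop :=
  ∀ U : Set X, IsOpen U → f '' U ⊆ interior (closure (f '' U))

/-- Q-admissible families of regular open sets with respect to ρ. -/
def QAdmissible [TopologicalSpace X] (ρ : X → Set X → ℝ) (P : Set (Set X)) : Prop :=
  (∀ V ∈ P, IsRegOpen V) ∧
  (∀ V ∈ P, ∀ q : ℚ,
    interior ((fun x => ρ x (closure V)) ⁻¹' Iic (q : ℝ)) ∈ P ∧
    interior ((fun x => ρ x (closure V)) ⁻¹' Ici (q : ℝ)) ∈ P) ∧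
  (∀ V ∈ P, interior Vᶜ ∈ P) ∧
  (∀ U ∈ P, ∀ V ∈ P, U ∩ V ∈ P ∧ interior (closure (U ∪ V)) ∈ P)

/-- The equivalence relation ∼_P. -/
def pSetoid (P : Set (Set X)) : Setoid X where
  r x y := ∀ V ∈ P, (x ∈ V ↔ y ∈ V)
  iseqv := ⟨fun _ _ _ => Iff.rfl, fun h V hV => (h V hV).symm,
    fun h1 h2 V hV => (h1 V hV).trans (h2 V hV)⟩

/-- The quotient X_P. -/
def XP (P : Set (Set X)) : Type _ := Quotient (pSetoid P)

/-- The quotient map q : X → X_P. -/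
def qP (P : Set (Set X)) : X → XP P := Quotient.mk (pSetoid P)

/-- The topology on X_P generated by images of members of P. -/
def topXP [TopologicalSpace X] (P : Set (Set X)) : TopologicalSpace (XP P) :=
  TopologicalSpace.generateFrom ((fun V => qP P '' V) '' P)

end Defs

section Aux

variable {X : Type*} [TopologicalSpace X]

lemma regOpen_intCl (S : Set X) : IsRegOpen (interior (closure S)) := by
  unfold IsRegOpen
  apply subset_antisymm
  · exact interior_mono (closure_minimal interior_subset isClosed_closure)
  · exact isOpen_interior.subset_interior_iff.mpr subset_closure

lemma regOpen_int_of_closed {C : Set X} (hC : IsClosed C) : IsRegOpen (interior C) := by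
  unfold IsRegOpen
  apply subset_antisymm
  · exact interior_mono (closure_minimal interior_subset hC)
  · exact isOpen_interior.subset_interior_iff.mpr subset_closure

lemma IsRegOpen.isOpen {V : Set X} (hV : IsRegOpen V) : IsOpen V := by
  rw [← hV]; exact isOpen_interior

lemma IsRegOpen.inter {U V : Set X} (hU : IsRegOpen U) (hV : IsRegOpen V) :
    IsRegOpen (U ∩ V) := by
  unfold IsRegOpen
  apply subset_antisymm
  · intro x hx
    constructor
    · rw [← hU]
      exact interior_mono (closure_mono inter_subset_left) hx
    · rw [← hV]
      exact interior_mono (closure_mono inter_subset_right) hx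
  · exact (hU.isOpen.inter hV.isOpen).subset_interior_iff.mpr subset_closure

lemma IsRegOpen.intCompl {V : Set X} (hV : IsRegOpen V) : IsRegOpen (interior Vᶜ) := by
  unfold IsRegOpen
  rw [interior_compl, closure_compl, hV, interior_compl]

lemma IsRegOpen.regClosed_closure {V : Set X} (hV : IsRegOpen V) :
    IsRegClosed (closure V) := by
  unfold IsRegClosed
  rw [show interior (closure V) = V from hV]

/-- One step of closing a family under the admissibility operations. -/
def stepFam (ρ : X → Set X → ℝ) (S : Set (Set X)) : Set (Set X) :=
  S ∪ (⋃ q : ℚ, (fun V => interior ((fun x => ρ x (closure V)) ⁻¹' Iic (q : ℝ))) '' S)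
    ∪ (⋃ q : ℚ, (fun V => interior ((fun x => ρ x (closure V)) ⁻¹' Ici (q : ℝ))) '' S)
    ∪ ((fun V => interior Vᶜ) '' S)
    ∪ (Set.image2 (fun U V => U ∩ V) S S)
    ∪ (Set.image2 (fun U V => interior (closure (U ∪ V))) S S)

lemma subset_stepFam (ρ : X → Set X → ℝ) (S : Set (Set X)) : S ⊆ stepFam ρ S :=
  fun _ hV => Or.inl (Or.inl (Or.inl (Or.inl (Or.inl hV))))

lemma mem_stepFam_iic {ρ : X → Set X → ℝ} {S : Set (Set X)} {V : Set X} (hV : V ∈ S) (q : ℚ) :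
    interior ((fun x => ρ x (closure V)) ⁻¹' Iic (q : ℝ)) ∈ stepFam ρ S :=
  Or.inl (Or.inl (Or.inl (Or.inl (Or.inr (mem_iUnion.2 ⟨q, mem_image_of_mem _ hV⟩)))))

lemma mem_stepFam_ici {ρ : X → Set X → ℝ} {S : Set (Set X)} {V : Set X} (hV : V ∈ S) (q : ℚ) :
    interior ((fun x => ρ x (closure V)) ⁻¹' Ici (q : ℝ)) ∈ stepFam ρ S :=
  Or.inl (Or.inl (Or.inl (Or.inr (mem_iUnion.2 ⟨q, mem_image_of_mem _ hV⟩))))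

lemma mem_stepFam_compl {ρ : X → Set X → ℝ} {S : Set (Set X)} {V : Set X} (hV : V ∈ S) :
    interior Vᶜ ∈ stepFam ρ S :=
  Or.inl (Or.inl (Or.inr (mem_image_of_mem _ hV)))

lemma mem_stepFam_inter {ρ : X → Set X → ℝ} {S : Set (Set X)} {U V : Set X}
    (hU : U ∈ S) (hV : V ∈ S) : U ∩ V ∈ stepFam ρ S :=
  Or.inl (Or.inr (Set.mem_image2_of_mem hU hV))

lemma mem_stepFam_union {ρ : X → Set X → ℝ} {S : Set (Set X)} {U V : Set X}
    (hU : U ∈ S) (hV : V ∈ S) : interior (closure (U ∪ V)) ∈ stepFam ρ S :=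
  Or.inr (Set.mem_image2_of_mem hU hV)

lemma stepFam_countable {ρ : X → Set X → ℝ} {S : Set (Set X)} (hS : S.Countable) :
    (stepFam ρ S).Countable :=
  ((((hS.union (countable_iUnion fun _ => hS.image _)).union
    (countable_iUnion fun _ => hS.image _)).union (hS.image _)).union
    (hS.image2 hS _)).union (hS.image2 hS _)

lemma stepFam_regOpen {ρ : X → Set X → ℝ} (hρ : IsCountKappaMetric ρ) {S : Set (Set X)}
    (hS : ∀ V ∈ S, IsRegOpen V) : ∀ V ∈ stepFam ρ S, IsRegOpen V := by
  rintro W (((((hW | hW) | hW) | hW) | hW) | hW)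
  · exact hS W hW
  · obtain ⟨q, V, hV, rfl⟩ := mem_iUnion.1 hW
    exact regOpen_int_of_closed
      (isClosed_Iic.preimage (hρ.k3 _ (hS V hV).regClosed_closure))
  · obtain ⟨q, V, hV, rfl⟩ := mem_iUnion.1 hW
    exact regOpen_int_of_closed
      (isClosed_Ici.preimage (hρ.k3 _ (hS V hV).regClosed_closure))
  · obtain ⟨V, hV, rfl⟩ := hW
    exact (hS V hV).intCompl
  · obtain ⟨U, hU, V, hV, rfl⟩ := hW
    exact (hS U hU).inter (hS V hV)
  · obtain ⟨U, hU, V, hV, rfl⟩ := hW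
    exact regOpen_intCl _

/-- Iterates of `stepFam`. -/
def itersFam (ρ : X → Set X → ℝ) (S : Set (Set X)) : ℕ → Set (Set X)
  | 0 => S
  | n + 1 => stepFam ρ (itersFam ρ S n)

lemma itersFam_mono {ρ : X → Set X → ℝ} {S : Set (Set X)} {m n : ℕ} (hmn : m ≤ n) :
    itersFam ρ S m ⊆ itersFam ρ S n := by
  induction n with
  | zero => rw [Nat.le_zero.1 hmn]
  | succ n ih =>
    rcases Nat.lt_or_ge m (n + 1) with hm | hm
    · exact (ih (Nat.lt_succ_iff.1 hm)).trans (subset_stepFam ρ _)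
    · rw [Nat.le_antisymm hmn hm]

/-- The closure of a family under the admissibility operations. -/
def closFam (ρ : X → Set X → ℝ) (S : Set (Set X)) : Set (Set X) :=
  ⋃ n, itersFam ρ S n

lemma subset_closFam (ρ : X → Set X → ℝ) (S : Set (Set X)) : S ⊆ closFam ρ S :=
  fun _ hV => mem_iUnion.2 ⟨0, hV⟩

lemma closFam_countable {ρ : X → Set X → ℝ} {S : Set (Set X)} (hS : S.Countable) :
    (closFam ρ S).Countable := by
  apply countable_iUnion
  intro n
  induction n with
  | zero => exact hS
  | succ n ih => exact stepFam_countable ih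

lemma closFam_regOpen {ρ : X → Set X → ℝ} (hρ : IsCountKappaMetric ρ) {S : Set (Set X)}
    (hS : ∀ V ∈ S, IsRegOpen V) : ∀ V ∈ closFam ρ S, IsRegOpen V := by
  intro V hV
  obtain ⟨n, hn⟩ := mem_iUnion.1 hV
  induction n generalizing V with
  | zero => exact hS V hn
  | succ n ih => exact stepFam_regOpen hρ (fun W hW => ih W (mem_iUnion.2 ⟨n, hW⟩) hW) V hn

lemma closFam_qadmissible {ρ : X → Set X → ℝ} (hρ : IsCountKappaMetric ρ) {S : Set (Set X)}
    (hS : ∀ V ∈ S, IsRegOpen V) : QAdmissible ρ (closFam ρ S) := by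
  refine ⟨closFam_regOpen hρ hS, ?_, ?_, ?_⟩
  · intro V hV q
    obtain ⟨n, hn⟩ := mem_iUnion.1 hV
    exact ⟨mem_iUnion.2 ⟨n + 1, mem_stepFam_iic hn q⟩,
      mem_iUnion.2 ⟨n + 1, mem_stepFam_ici hn q⟩⟩
  · intro V hV
    obtain ⟨n, hn⟩ := mem_iUnion.1 hV
    exact mem_iUnion.2 ⟨n + 1, mem_stepFam_compl hn⟩
  · intro U hU V hV
    obtain ⟨m, hm⟩ := mem_iUnion.1 hU
    obtain ⟨n, hn⟩ := mem_iUnion.1 hV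
    have hU' : U ∈ itersFam ρ S (max m n) := itersFam_mono (le_max_left m n) hm
    have hV' : V ∈ itersFam ρ S (max m n) := itersFam_mono (le_max_right m n) hn
    exact ⟨mem_iUnion.2 ⟨max m n + 1, mem_stepFam_inter hU' hV'⟩,
      mem_iUnion.2 ⟨max m n + 1, mem_stepFam_union hU' hV'⟩⟩

end Aux

/-- every continuous h : X → [0,1] factors through some quotient
X_{P'} for a countable Q-admissible P' ⊇ P. -/
theorem stmt13 {X : Type*} [TopologicalSpace X] (hpc : Pseudocompact X)
    (ρ : X → Set X → ℝ) (hρ : IsCountKappaMetric ρ)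
    (P : Set (Set X)) (hP : QAdmissible ρ P) (hPc : P.Countable)
    (huniv : Set.univ ∈ P)
    (h : X → ℝ) (hh : Continuous h) (hrange : ∀ x, h x ∈ Set.Icc (0 : ℝ) 1) :
    ∃ P' : Set (Set X), P ⊆ P' ∧ P'.Countable ∧ QAdmissible ρ P' ∧
      ∃ g : XP P' → ℝ, @Continuous _ _ (topXP P') _ g ∧
        (∀ z, g z ∈ Set.Icc (0 : ℝ) 1) ∧ ∀ x, h x = g (qP P' x) := by
  classical
  -- the basic separating sets
  set U : ℚ → Set X := fun q => interior (closure (h ⁻¹' Iio (q : ℝ))) with hU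
  set W : ℚ → Set X := fun q => interior (closure (h ⁻¹' Ioi (q : ℝ))) with hW
  set S0 : Set (Set X) := P ∪ Set.range U ∪ Set.range W with hS0
  have hS0reg : ∀ V ∈ S0, IsRegOpen V := by
    rintro V ((hV | ⟨q, rfl⟩) | ⟨q, rfl⟩)
    · exact hP.1 V hV
    · exact regOpen_intCl _
    · exact regOpen_intCl _
  set P' : Set (Set X) := closFam ρ S0 with hP'
  have hPP' : P ⊆ P' := fun V hV =>
    subset_closFam ρ S0 (Or.inl (Or.inl hV))
  have hUP' : ∀ q : ℚ, U q ∈ P' := fun q =>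
    subset_closFam ρ S0 (Or.inl (Or.inr ⟨q, rfl⟩))
  have hWP' : ∀ q : ℚ, W q ∈ P' := fun q =>
    subset_closFam ρ S0 (Or.inr ⟨q, rfl⟩)
  have hUsub : ∀ q : ℚ, U q ⊆ h ⁻¹' Iic (q : ℝ) := by
    intro q
    refine interior_subset.trans (closure_minimal ?_ (isClosed_Iic.preimage hh))
    exact preimage_mono Iio_subset_Iic_self
  have hsubU : ∀ q : ℚ, h ⁻¹' Iio (q : ℝ) ⊆ U q :=
    fun q => (isOpen_Iio.preimage hh).subset_interior_iff.mpr subset_closure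
  have hWsub : ∀ q : ℚ, W q ⊆ h ⁻¹' Ici (q : ℝ) := by
    intro q
    refine interior_subset.trans (closure_minimal ?_ (isClosed_Ici.preimage hh))
    exact preimage_mono Ioi_subset_Ici_self
  have hsubW : ∀ q : ℚ, h ⁻¹' Ioi (q : ℝ) ⊆ W q :=
    fun q => (isOpen_Ioi.preimage hh).subset_interior_iff.mpr subset_closure
  -- h respects the equivalence relation
  have hconst : ∀ a b : X, (pSetoid P').r a b → h a = h b := by
    intro a b hab
    by_contra hne
    rcases lt_or_gt_of_ne hne with hlt | hlt
    · obtain ⟨q, hq1, hq2⟩ := exists_rat_btwn hlt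
      have ha : a ∈ U q := hsubU q hq1
      have hb : b ∈ U q := (hab (U q) (hUP' q)).1 ha
      exact absurd (hUsub q hb) (not_le.2 hq2)
    · obtain ⟨q, hq1, hq2⟩ := exists_rat_btwn hlt
      have hb : b ∈ U q := hsubU q hq1
      have ha : a ∈ U q := (hab (U q) (hUP' q)).2 hb
      exact absurd (hUsub q ha) (not_le.2 hq2)
  refine ⟨P', hPP', closFam_countable ((hPc.union (countable_range U)).union
    (countable_range W) : (P ∪ Set.range U ∪ Set.range W).Countable),
    closFam_qadmissible hρ hS0reg, ?_⟩
  -- the factored map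
  set g : XP P' → ℝ := Quotient.lift h hconst with hg
  have hfac : ∀ x, g (qP P' x) = h x := fun x => rfl
  -- preimage identities
  have hIio : ∀ a : ℝ, g ⁻¹' Iio a = ⋃ q : {q : ℚ // (q : ℝ) < a}, qP P' '' U q.1 := by
    intro a
    ext z
    constructor
    · intro hz
      obtain ⟨x, rfl⟩ := Quotient.exists_rep z
      have hx : h x < a := hz
      obtain ⟨q, hq1, hq2⟩ := exists_rat_btwn hx
      exact mem_iUnion.2 ⟨⟨q, hq2⟩, ⟨x, hsubU q hq1, rfl⟩⟩
    · intro hz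
      obtain ⟨⟨q, hq⟩, y, hy, rfl⟩ := mem_iUnion.1 hz
      exact lt_of_le_of_lt (hUsub q hy) hq
  have hIoi : ∀ a : ℝ, g ⁻¹' Ioi a = ⋃ q : {q : ℚ // a < (q : ℝ)}, qP P' '' W q.1 := by
    intro a
    ext z
    constructor
    · intro hz
      obtain ⟨x, rfl⟩ := Quotient.exists_rep z
      have hx : a < h x := hz
      obtain ⟨q, hq1, hq2⟩ := exists_rat_btwn hx
      exact mem_iUnion.2 ⟨⟨q, hq1⟩, ⟨x, hsubW q hq2, rfl⟩⟩
    · intro hz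
      obtain ⟨⟨q, hq⟩, y, hy, rfl⟩ := mem_iUnion.1 hz
      exact lt_of_lt_of_le hq (hWsub q hy)
  -- continuity
  have hbasic : ∀ V ∈ P', IsOpen[topXP P'] (qP P' '' V) := by
    intro V hV
    exact TopologicalSpace.isOpen_generateFrom_of_mem ⟨V, hV, rfl⟩
  have hcont : @Continuous _ _ (topXP P') _ g := by
    letI : TopologicalSpace (XP P') := topXP P'
    rw [OrderTopology.topology_eq_generate_intervals (α := ℝ)]
    refine continuous_generateFrom_iff.mpr ?_
    rintro s ⟨a, rfl | rfl⟩
    · rw [hIoi a]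
      exact isOpen_iUnion fun q => hbasic _ (hWP' q.1)
    · rw [hIio a]
      exact isOpen_iUnion fun q => hbasic _ (hUP' q.1)
  refine ⟨g, hcont, ?_, fun x => (hfac x).symm⟩
  intro z
  obtain ⟨x, rfl⟩ := Quotient.exists_rep z
  exact hrange x
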